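/- For all natural numbers m and n with n ≥ 1, and for every k with k + 1 < m·n, the vertices f(k) and f(k+1) are adjacent in the grid graph G(m,n); consequently the boustrophedon enumeration is a Hamiltonian path of G(m,n). -/

import Mathlib

/-- The boustrophedon (S-rule) enumeration of the `m × n` grid of vertices:
the `k`-th vertex visited is in row `k / n`; even-indexed rows are read
left-to-right and odd-indexed rows right-to-left. -/
def bous (m n : ℕ) (hn : 1 ≤ n) (k : Fin (m * n)) : Fin m × Fin n :=
  if Even ((k : ℕ) / n) then
    (⟨(k : ℕ) / n, Nat.div_lt_of_lt_mul (Nat.mul_comm m n ▸ k.isLt)⟩, ⟨(k : ℕ) % n, Nat.mod_lt _ hn⟩)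
  else
    (⟨(k : ℕ) / n, Nat.div_lt_of_lt_mul (Nat.mul_comm m n ▸ k.isLt)⟩,
     ⟨n - 1 - (k : ℕ) % n, by omega⟩)

/-- The grid graph `G(m,n)` on `Fin m × Fin n`: `(a,b)` and `(c,d)` are adjacent
iff (`a = c` and `|b − d| = 1`) or (`b = d` and `|a − c| = 1`); equivalently, the
box product of the path graphs `pathGraph m` and `pathGraph n`. -/
def gridGraph (m n : ℕ) : SimpleGraph (Fin m × Fin n) :=
  (SimpleGraph.pathGraph m).boxProd (SimpleGraph.pathGraph n)

lemma bous_step_lt (n k : ℕ) (hn : 1 ≤ n) (h : k % n + 1 < n) :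
    (k+1)/n = k/n ∧ (k+1)%n = k%n+1 := by
  have h1 : 1 % n = 1 := Nat.mod_eq_of_lt (by omega)
  have hmod : (k+1)%n = k%n+1 := by
    rw [Nat.add_mod, h1, Nat.mod_eq_of_lt h]
  have hd : ¬ n ∣ (k+1) := by rw [Nat.dvd_iff_mod_eq_zero]; omega
  have := (Nat.succ_div : (k+1)/n = _)
  simp [hd] at this
  exact ⟨this, hmod⟩

lemma bous_step_eq (n k : ℕ) (hn : 1 ≤ n) (h : k % n + 1 = n) :
    (k+1)/n = k/n+1 ∧ (k+1)%n = 0 := by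
  have hmod : (k+1)%n = 0 := by
    rw [Nat.add_mod]
    rcases Nat.eq_or_lt_of_le hn with h1 | h1
    · simp [← h1, Nat.mod_one]
    · rw [Nat.mod_eq_of_lt h1, h, Nat.mod_self]
  have hd : n ∣ (k+1) := by rw [Nat.dvd_iff_mod_eq_zero]; omega
  have := (Nat.succ_div : (k+1)/n = _)
  simp [hd] at this
  exact ⟨this, hmod⟩

lemma bous_adj_aux (m n : ℕ) (hn : 1 ≤ n) (k : ℕ) (hk : k + 1 < m * n) :
    (gridGraph m n).Adj (bous m n hn ⟨k, Nat.lt_of_succ_lt hk⟩) (bous m n hn ⟨k + 1, hk⟩) := by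
  simp only [gridGraph, bous]
  have hr : k % n < n := Nat.mod_lt _ hn
  by_cases hsame : k % n + 1 < n
  · obtain ⟨hdiv, hmod⟩ := bous_step_lt n k hn hsame
    simp only [hdiv, hmod]
    by_cases he : Even (k / n) <;>
      simp [he, SimpleGraph.boxProd_adj, SimpleGraph.pathGraph_adj, Fin.ext_iff] <;>
      omega
  · obtain ⟨hdiv, hmod⟩ := bous_step_eq n k hn (by omega)
    simp only [hdiv, hmod]
    by_cases he : Even (k / n)
    · have he' : ¬ Even (k / n + 1) := by simp [Nat.even_add_one, he]
      simp [he, he', SimpleGraph.boxProd_adj, SimpleGraph.pathGraph_adj, Fin.ext_iff]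
      omega
    · have he' : Even (k / n + 1) := by simp [Nat.even_add_one, he]
      simp [he, he', SimpleGraph.boxProd_adj, SimpleGraph.pathGraph_adj, Fin.ext_iff]
      omega

lemma bous_inj (m n : ℕ) (hn : 1 ≤ n) : Function.Injective (bous m n hn) := by
  intro a b hab
  simp only [bous] at hab
  have ha : (a : ℕ) % n < n := Nat.mod_lt _ hn
  have hb : (b : ℕ) % n < n := Nat.mod_lt _ hn
  have hda := Nat.div_add_mod (a : ℕ) n
  have hdb := Nat.div_add_mod (b : ℕ) n
  by_cases hea : Even ((a : ℕ) / n) <;> by_cases heb : Even ((b : ℕ) / n) <;>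
    simp only [hea, heb, if_true, if_false, if_pos, if_neg, not_false_iff, Prod.mk.injEq,
      Fin.mk.injEq] at hab <;>
    obtain ⟨h1, h2⟩ := hab
  · apply Fin.ext; rw [h1, h2] at hda; omega
  · exact absurd (h1 ▸ hea) heb
  · exact absurd (h1 ▸ heb) hea
  · apply Fin.ext
    have h2' : (a : ℕ) % n = (b : ℕ) % n := by omega
    rw [h1, h2'] at hda
    omega

/-- For all `m, n` with `n ≥ 1` and every `k` with `k + 1 < m·n`, the vertices
`f(k)` and `f(k+1)` of the boustrophedon enumeration are adjacent in the grid
graph `G(m,n)`; consequently (together with bijectivity) the boustrophedon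
enumeration is a Hamiltonian path of `G(m,n)`. -/
theorem bous_consecutive_adj (m n : ℕ) (hn : 1 ≤ n) :
    (∀ k : ℕ, ∀ hk : k + 1 < m * n,
      (gridGraph m n).Adj (bous m n hn ⟨k, by omega⟩) (bous m n hn ⟨k + 1, hk⟩)) ∧
    Function.Bijective (bous m n hn) := by
  refine ⟨fun k hk => bous_adj_aux m n hn k hk, ?_⟩
  have hc : Fintype.card (Fin (m * n)) = Fintype.card (Fin m × Fin n) := by simp
  exact (Fintype.bijective_iff_injective_and_card _).2 ⟨bous_inj m n hn, hc⟩
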